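/- Let N, N_t, P be positive integers, let h_{t,i} ∈ ℂ for t = 1,…,N_t and i = 1,…,P be channel gains, let k_i, l_i be integers (the Doppler and delay shifts of path i), and let k̃_t, l̃_t be integers (the cyclic Doppler and delay shift steps applied at transmit antenna t). Then the sum of the per-antenna time-domain channel matrices composed with the TD-CDDS precoding matrices satisfies Σ_{t=1}^{N_t} ( Σ_{i=1}^{P} h_{t,i} Δ_N^{k_i} Π_N^{l_i} ) · ( Δ_N^{k̃_t} Π_N^{l̃_t} ) = Σ_{t=1}^{N_t} Σ_{i=1}^{P} h_{t,i} e^{−2πi k̃_t l_i / N} Δ_N^{k_i + k̃_t} Π_N^{l_i + l̃_t}. In particular, the multi-antenna system with time-domain cyclic delay-Doppler shift precoding is equivalent to a single-antenna system whose paths have delays l_i + l̃_t, Dopplers k_i + k̃_t, and gains h_{t,i} e^{−2πi k̃_t l_i / N}. -/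

import Mathlib

open Matrix Complex

/-- The `N × N` forward cyclic-shift matrix raised to the (integer) power `l`:
`(Π_N^l)[p,q] = 1` if `p ≡ q + l (mod N)` and `0` otherwise. -/
noncomputable def cyclicShift (N : ℕ) (l : ℤ) : Matrix (Fin N) (Fin N) ℂ :=
  Matrix.of fun p q => if ((p : ℕ) : ZMod N) = ((q : ℕ) : ZMod N) + (l : ZMod N) then 1 else 0

/-- The digital frequency-shift matrix `Δ_N^k = diag(e^{2πi k n / N}, n = 0,…,N−1)`. -/
noncomputable def dopplerShift (N : ℕ) (k : ℤ) : Matrix (Fin N) (Fin N) ℂ :=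
  Matrix.diagonal fun n : Fin N =>
    Complex.exp (2 * Real.pi * Complex.I * (k : ℂ) * ((n : ℕ) : ℂ) / (N : ℂ))

/-- the sum of the per-antenna time-domain channel matrices composed with the
TD-CDDS precoding matrices equals the time-domain channel matrix of an equivalent single-antenna
channel whose paths have delays `l_i + l̃_t`, Dopplers `k_i + k̃_t`, and gains
`h_{t,i} e^{−2πi k̃_t l_i / N}`. -/
lemma castFin_inj {N : ℕ} (hN : 0 < N) {p q : Fin N}
    (h : ((p : ℕ) : ZMod N) = ((q : ℕ) : ZMod N)) : p = q := by
  haveI : NeZero N := ⟨hN.ne'⟩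
  have := congrArg ZMod.val h
  rw [ZMod.val_natCast_of_lt p.isLt, ZMod.val_natCast_of_lt q.isLt] at this
  exact Fin.ext this

lemma exp_key {N : ℕ} (hN : 0 < N) (k l : ℤ) (p q : Fin N)
    (hpq : ((p : ℕ) : ZMod N) = ((q : ℕ) : ZMod N) + (l : ZMod N)) :
    Complex.exp (2 * Real.pi * Complex.I * (k : ℂ) * ((p : ℕ) : ℂ) / (N : ℂ)) =
      Complex.exp (2 * Real.pi * Complex.I * (k : ℂ) * ((q : ℕ) : ℂ) / (N : ℂ)) *
      Complex.exp (2 * Real.pi * Complex.I * (k : ℂ) * (l : ℂ) / (N : ℂ)) := by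
  have hz : ((p : ℕ) : ℤ) ≡ ((q : ℕ) : ℤ) + l [ZMOD (N : ℤ)] := by
    rw [← ZMod.intCast_eq_intCast_iff]
    push_cast
    push_cast at hpq
    exact hpq
  obtain ⟨m, hm⟩ := hz.dvd
  have hp : ((p : ℕ) : ℂ) = ((q : ℕ) : ℂ) + (l : ℂ) - (N : ℂ) * (m : ℂ) := by
    have h2 : ((p : ℕ) : ℤ) = ((q : ℕ) : ℤ) + l - (N : ℤ) * m := by omega
    exact_mod_cast congrArg (Int.cast : ℤ → ℂ) h2
  have hNC : (N : ℂ) ≠ 0 := Nat.cast_ne_zero.mpr hN.ne'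
  have harg : 2 * Real.pi * Complex.I * (k : ℂ) * ((p : ℕ) : ℂ) / (N : ℂ) =
      2 * Real.pi * Complex.I * (k : ℂ) * ((q : ℕ) : ℂ) / (N : ℂ) +
      2 * Real.pi * Complex.I * (k : ℂ) * (l : ℂ) / (N : ℂ) +
      ((-(k * m) : ℤ) : ℂ) * (2 * Real.pi * Complex.I) := by
    rw [hp]; push_cast; field_simp; ring
  rw [harg, Complex.exp_add, Complex.exp_add, Complex.exp_int_mul_two_pi_mul_I, mul_one]

lemma shift_doppler_comm {N : ℕ} (hN : 0 < N) (l k : ℤ) :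
    cyclicShift N l * dopplerShift N k =
      Complex.exp (-(2 * Real.pi * Complex.I * (k : ℂ) * (l : ℂ) / (N : ℂ))) •
        (dopplerShift N k * cyclicShift N l) := by
  ext p q
  simp only [cyclicShift, dopplerShift, Matrix.mul_diagonal, Matrix.diagonal_mul,
    Matrix.smul_apply, Matrix.of_apply, smul_eq_mul]
  by_cases hc : ((p : ℕ) : ZMod N) = ((q : ℕ) : ZMod N) + (l : ZMod N)
  · simp only [hc, if_true, one_mul, mul_one]
    rw [exp_key hN k l p q hc, Complex.exp_neg]
    field_simp
  · simp [hc]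

lemma doppler_mul {N : ℕ} (k1 k2 : ℤ) :
    dopplerShift N k1 * dopplerShift N k2 = dopplerShift N (k1 + k2) := by
  ext a b
  rcases eq_or_ne a b with rfl | hab
  · simp only [dopplerShift, Matrix.diagonal_mul_diagonal, Matrix.diagonal_apply_eq]
    rw [← Complex.exp_add, ← add_div]
    congr 1
    push_cast
    ring
  · simp [dopplerShift, Matrix.diagonal_mul_diagonal, Matrix.diagonal_apply_ne _ hab]

lemma shift_mul {N : ℕ} (hN : 0 < N) (l1 l2 : ℤ) :
    cyclicShift N l1 * cyclicShift N l2 = cyclicShift N (l1 + l2) := by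
  haveI : NeZero N := ⟨hN.ne'⟩
  ext p r
  simp only [cyclicShift, Matrix.mul_apply, Matrix.of_apply]
  set q0 : Fin N := ⟨(((r : ℕ) : ZMod N) + (l2 : ZMod N)).val, ZMod.val_lt _⟩ with hq0
  have hq0c : ((q0 : ℕ) : ZMod N) = ((r : ℕ) : ZMod N) + (l2 : ZMod N) :=
    ZMod.natCast_rightInverse _
  rw [Finset.sum_eq_single q0]
  · rw [hq0c, if_pos rfl, mul_one]
    have hiff : (((p : ℕ) : ZMod N) = ((r : ℕ) : ZMod N) + (l2 : ZMod N) + (l1 : ZMod N)) =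
        (((p : ℕ) : ZMod N) = ((r : ℕ) : ZMod N) + ((l1 + l2 : ℤ) : ZMod N)) := by
      rw [eq_iff_iff]
      push_cast
      constructor <;> intro hh <;> rw [hh] <;> ring
    rw [eq_iff_iff] at hiff
    simp only [hiff]
  · intro b _ hb
    have hne : ¬ (((b : ℕ) : ZMod N) = ((r : ℕ) : ZMod N) + (l2 : ZMod N)) :=
      fun hbc => hb (castFin_inj hN (hbc.trans hq0c.symm))
    rw [if_neg hne, mul_zero]
  · intro hh; exact absurd (Finset.mem_univ q0) hh

theorem tdcdds_equivalent_channel (N Nt P : ℕ) (hN : 0 < N) (hNt : 0 < Nt) (hP : 0 < P)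
    (h : Fin Nt → Fin P → ℂ) (kp lp : Fin P → ℤ) (kt lt : Fin Nt → ℤ) :
    ∑ t : Fin Nt,
      (∑ i : Fin P, h t i • (dopplerShift N (kp i) * cyclicShift N (lp i))) *
        (dopplerShift N (kt t) * cyclicShift N (lt t)) =
    ∑ t : Fin Nt, ∑ i : Fin P,
      (h t i * Complex.exp (-(2 * Real.pi * Complex.I * (kt t : ℂ) * (lp i : ℂ) / (N : ℂ)))) •
        (dopplerShift N (kp i + kt t) * cyclicShift N (lp i + lt t)) := by
  refine Finset.sum_congr rfl fun t _ => ?_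
  rw [Finset.sum_mul]
  refine Finset.sum_congr rfl fun i _ => ?_
  rw [smul_mul_assoc, Matrix.mul_assoc, ← Matrix.mul_assoc (cyclicShift N (lp i)),
    shift_doppler_comm hN, Matrix.smul_mul, Matrix.mul_smul, smul_smul,
    ← Matrix.mul_assoc, ← Matrix.mul_assoc, doppler_mul, Matrix.mul_assoc,
    shift_mul hN]
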